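/- Let X ∈ ℝ^{m×p}, W ∈ ℝ^{m×q}, L*, S*, L̂, Ŝ ∈ ℝ^{p×q}, and Y = X(L* + S*) + W. Write Δ_L = L̂ − L* and Δ_S = Ŝ − S*. Assume: (i) ‖Y − X(L̂ + Ŝ)‖_F² ≤ ‖Y − X(L* + S*)‖_F² (optimality of (L̂, Ŝ)); (ii) rank(Δ_L) ≤ 2r; (iii) ‖Δ_S‖_0 ≤ 2s. Then ‖X(Δ_L + Δ_S)‖_F² ≤ 2√(2r)·‖XᵀW‖_op·‖Δ_L‖_F + 2√(2s)·‖XᵀW‖_max·‖Δ_S‖_F. -/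

import Mathlib

open Matrix BigOperators

/-- Frobenius norm of a real matrix. -/
noncomputable def frobNorm {p q : ℕ} (M : Matrix (Fin p) (Fin q) ℝ) : ℝ :=
  Real.sqrt (∑ i, ∑ j, (M i j) ^ 2)

/-- ℓ2 operator norm (largest singular value) of a real matrix. -/
noncomputable def opNorm {p q : ℕ} (M : Matrix (Fin p) (Fin q) ℝ) : ℝ :=
  ‖LinearMap.toContinuousLinearMap (Matrix.toEuclideanLin M)‖

/-- Maximum absolute entry of a real matrix. -/
noncomputable def maxNorm {p q : ℕ} (M : Matrix (Fin p) (Fin q) ℝ) : ℝ :=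
  ⨆ i, ⨆ j, |M i j|

/-- Number of nonzero entries of a matrix (the "ℓ0 norm"). -/
noncomputable def sparsity {p q : ℕ} (M : Matrix (Fin p) (Fin q) ℝ) : ℕ :=
  {ij : Fin p × Fin q | M ij.1 ij.2 ≠ 0}.ncard

/-- Euclidean norm of a vector. -/
noncomputable def e2norm {n : ℕ} (v : Fin n → ℝ) : ℝ :=
  Real.sqrt (∑ i, (v i) ^ 2)

/-- Supremum norm of a vector. -/
noncomputable def supNorm {n : ℕ} (v : Fin n → ℝ) : ℝ :=
  ⨆ i, |v i|

/-- The statement that every eigenvalue of the symmetric matrix `A` is at least `κ`,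
expressed through the quadratic form: `vᵀ A v ≥ κ ‖v‖₂²` for every `v`. -/
def minEigBound {n : ℕ} (A : Matrix (Fin n) (Fin n) ℝ) (κ : ℝ) : Prop :=
  ∀ v : Fin n → ℝ, κ * (v ⬝ᵥ v) ≤ v ⬝ᵥ (A *ᵥ v)

/-! ### Auxiliary material -/

/-- The Frobenius inner product of two matrices. -/
noncomputable def innerM {p q : ℕ} (A B : Matrix (Fin p) (Fin q) ℝ) : ℝ :=
  ∑ i, ∑ j, A i j * B i j

lemma frob_sq {p q : ℕ} (M : Matrix (Fin p) (Fin q) ℝ) :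
    frobNorm M ^ 2 = ∑ i, ∑ j, (M i j) ^ 2 :=
  Real.sq_sqrt (by positivity)

lemma frob_nonneg {p q : ℕ} (M : Matrix (Fin p) (Fin q) ℝ) : 0 ≤ frobNorm M :=
  Real.sqrt_nonneg _

lemma dot_shift {p q : ℕ} (M : Matrix (Fin p) (Fin q) ℝ) (x : Fin p → ℝ) (y : Fin q → ℝ) :
    (Mᵀ *ᵥ x) ⬝ᵥ y = x ⬝ᵥ (M *ᵥ y) := by
  rw [Matrix.mulVec_transpose, ← Matrix.dotProduct_mulVec]

lemma dot_cs {n : ℕ} (u v : Fin n → ℝ) :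
    u ⬝ᵥ v ≤ Real.sqrt (∑ i, u i ^ 2) * Real.sqrt (∑ i, v i ^ 2) := by
  have h := real_inner_le_norm ((WithLp.equiv 2 (Fin n → ℝ)).symm u)
    ((WithLp.equiv 2 (Fin n → ℝ)).symm v)
  simp only [EuclideanSpace.norm_eq, PiLp.inner_apply, RCLike.inner_apply,
    WithLp.equiv_symm_apply, PiLp.toLp_apply, starRingEnd_apply, star_trivial, Real.norm_eq_abs,
    sq_abs] at h
  simpa [dotProduct, mul_comm] using h

lemma e2_mulVec_le {a b : ℕ} (A : Matrix (Fin a) (Fin b) ℝ) (v : Fin b → ℝ) :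
    Real.sqrt (∑ i, (A *ᵥ v) i ^ 2) ≤ opNorm A * Real.sqrt (∑ j, v j ^ 2) := by
  have h := (LinearMap.toContinuousLinearMap (Matrix.toEuclideanLin A)).le_opNorm
    ((WithLp.equiv 2 (Fin b → ℝ)).symm v)
  simp only [LinearMap.coe_toContinuousLinearMap', WithLp.equiv_symm_apply, Matrix.toEuclideanLin_apply_piLp_toLp,
    EuclideanSpace.norm_eq, PiLp.toLp_apply, Real.norm_eq_abs, sq_abs] at h
  exact h

lemma cs_card {ι : Type*} (t : Finset ι) (f : ι → ℝ) (hf : ∀ i ∈ t, 0 ≤ f i) :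
    ∑ i ∈ t, f i ≤ Real.sqrt t.card * Real.sqrt (∑ i ∈ t, f i ^ 2) := by
  have h := sq_sum_le_card_mul_sum_sq (s := t) (f := f)
  have h0 : 0 ≤ ∑ i ∈ t, f i := Finset.sum_nonneg hf
  calc ∑ i ∈ t, f i = Real.sqrt ((∑ i ∈ t, f i) ^ 2) := (Real.sqrt_sq h0).symm
    _ ≤ Real.sqrt (t.card * ∑ i ∈ t, f i ^ 2) := Real.sqrt_le_sqrt h
    _ = Real.sqrt t.card * Real.sqrt (∑ i ∈ t, f i ^ 2) := Real.sqrt_mul (by positivity) _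

lemma innerM_eq_trace {p q : ℕ} (A B : Matrix (Fin p) (Fin q) ℝ) :
    innerM A B = Matrix.trace (A * Bᵀ) := by
  simp [innerM, Matrix.trace, Matrix.mul_apply, Matrix.diag]

lemma sum_cols {p q : ℕ} (U : Matrix (Fin p) (Fin p) ℝ) (hU : U * Uᵀ = 1)
    (A B : Matrix (Fin p) (Fin q) ℝ) :
    ∑ k, ((Aᵀ *ᵥ (fun i => U i k)) ⬝ᵥ (Bᵀ *ᵥ (fun i => U i k))) = innerM A B := by
  have hcol : ∀ (M : Matrix (Fin p) (Fin q) ℝ) (k : Fin p),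
      Mᵀ *ᵥ (fun i => U i k) = fun j => (Mᵀ * U) j k := by
    intro M k; funext j
    simp [Matrix.mulVec, Matrix.mul_apply, dotProduct]
  calc ∑ k, ((Aᵀ *ᵥ (fun i => U i k)) ⬝ᵥ (Bᵀ *ᵥ (fun i => U i k)))
      = ∑ k, (((Aᵀ * U)ᵀ * (Bᵀ * U)) k k) := by
        refine Finset.sum_congr rfl fun k _ => ?_
        rw [hcol, hcol]
        simp [Matrix.mul_apply, dotProduct, mul_comm]
    _ = Matrix.trace ((Aᵀ * U)ᵀ * (Bᵀ * U)) := rfl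
    _ = innerM A B := by
        rw [Matrix.transpose_mul, Matrix.transpose_transpose, Matrix.trace_mul_comm,
          innerM_eq_trace]
        rw [show Bᵀ * U * (Uᵀ * A) = Bᵀ * A by
          rw [Matrix.mul_assoc, ← Matrix.mul_assoc U, hU, Matrix.one_mul]]
        rw [Matrix.trace_mul_comm]

/-- Trace duality + rank: `⟨A, B⟩ ≤ √rank(B) ‖A‖_op ‖B‖_F`. -/
lemma innerM_le_lowrank {p q : ℕ} (A B : Matrix (Fin p) (Fin q) ℝ) :
    innerM A B ≤ Real.sqrt B.rank * opNorm A * frobNorm B := by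
  classical
  have hG : (B * Bᵀ).IsHermitian := by
    have h := Matrix.isHermitian_mul_conjTranspose_self B
    rwa [Matrix.conjTranspose_eq_transpose_of_trivial] at h
  set u : Fin p → Fin p → ℝ := fun k => ⇑(hG.eigenvectorBasis k) with hu
  set c : Fin p → Fin q → ℝ := fun k => Bᵀ *ᵥ u k with hc
  have hUmem := (Matrix.mem_unitaryGroup_iff).mp hG.eigenvectorUnitary.2
  rw [Matrix.star_eq_conjTranspose, Matrix.conjTranspose_eq_transpose_of_trivial] at hUmem
  have hcolU : ∀ k, (fun i => (hG.eigenvectorUnitary : Matrix (Fin p) (Fin p) ℝ) i k) = u k := by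
    intro k; funext i; exact hG.eigenvectorUnitary_apply i k
  have hAB : ∑ k, ((Aᵀ *ᵥ u k) ⬝ᵥ c k) = innerM A B := by
    have h := sum_cols _ hUmem A B
    simpa only [hcolU] using h
  have hBB : ∑ k, (c k ⬝ᵥ c k) = innerM B B := by
    have h := sum_cols _ hUmem B B
    simpa only [hcolU] using h
  have hunit : ∀ k, ∑ i, (u k i) ^ 2 = 1 := by
    intro k
    have hn : ‖hG.eigenvectorBasis k‖ = 1 := hG.eigenvectorBasis.orthonormal.1 k
    rw [EuclideanSpace.norm_eq] at hn
    have h2 := Real.sqrt_eq_one.mp hn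
    simpa [Real.norm_eq_abs, sq_abs] using h2
  have hdotu : ∀ k, u k ⬝ᵥ u k = 1 := by
    intro k
    have h := hunit k
    simpa [dotProduct, sq] using h
  have hcc : ∀ k, c k ⬝ᵥ c k = ∑ j, c k j ^ 2 := by
    intro k; simp [dotProduct, sq]
  have heig : ∀ k, c k ⬝ᵥ c k = hG.eigenvalues k := by
    intro k
    have h1 : c k ⬝ᵥ c k = u k ⬝ᵥ ((B * Bᵀ) *ᵥ u k) := by
      show (Bᵀ *ᵥ u k) ⬝ᵥ (Bᵀ *ᵥ u k) = _
      rw [dot_shift B (u k) (Bᵀ *ᵥ u k), Matrix.mulVec_mulVec]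
    rw [h1, hG.mulVec_eigenvectorBasis k, dotProduct_smul, hdotu, smul_eq_mul, mul_one]
  have hterm : ∀ k, (Aᵀ *ᵥ u k) ⬝ᵥ c k ≤ opNorm A * Real.sqrt (c k ⬝ᵥ c k) := by
    intro k
    have h1 : (Aᵀ *ᵥ u k) ⬝ᵥ c k = u k ⬝ᵥ (A *ᵥ c k) := dot_shift A (u k) (c k)
    rw [h1]
    calc u k ⬝ᵥ (A *ᵥ c k)
        ≤ Real.sqrt (∑ i, u k i ^ 2) * Real.sqrt (∑ i, (A *ᵥ c k) i ^ 2) := dot_cs _ _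
      _ = Real.sqrt (∑ i, (A *ᵥ c k) i ^ 2) := by rw [hunit k, Real.sqrt_one, one_mul]
      _ ≤ opNorm A * Real.sqrt (∑ j, c k j ^ 2) := e2_mulVec_le A (c k)
      _ = opNorm A * Real.sqrt (c k ⬝ᵥ c k) := by rw [hcc k]
  have hzero : ∀ k, hG.eigenvalues k = 0 → (Aᵀ *ᵥ u k) ⬝ᵥ c k = 0 := by
    intro k hk
    have h : c k = 0 := by
      have h2 := heig k; rw [hk] at h2; exact dotProduct_self_eq_zero.mp h2
    rw [h, dotProduct_zero]
  set t := Finset.univ.filter (fun k => hG.eigenvalues k ≠ 0) with ht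
  have hsum : innerM A B = ∑ k ∈ t, ((Aᵀ *ᵥ u k) ⬝ᵥ c k) := by
    rw [← hAB]
    refine (Finset.sum_filter_of_ne ?_).symm
    intro k _ h
    contrapose! h
    exact hzero k (not_not.mp (by simpa using h))
  have hcardt : t.card = B.rank := by
    have h1 : t.card = Fintype.card {k // hG.eigenvalues k ≠ 0} := (Fintype.card_subtype _).symm
    rw [h1, ← hG.rank_eq_card_non_zero_eigs, Matrix.rank_self_mul_transpose]
  have hccnn : ∀ k, (0:ℝ) ≤ c k ⬝ᵥ c k := by
    intro k; rw [hcc k]; positivity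
  have hsub : ∑ k ∈ t, (c k ⬝ᵥ c k) ≤ frobNorm B ^ 2 := by
    rw [frob_sq]
    calc ∑ k ∈ t, (c k ⬝ᵥ c k) ≤ ∑ k, (c k ⬝ᵥ c k) :=
          Finset.sum_le_sum_of_subset_of_nonneg (Finset.subset_univ t) (fun k _ _ => hccnn k)
      _ = innerM B B := hBB
      _ = ∑ i, ∑ j, (B i j) ^ 2 := by simp [innerM, sq]
  calc innerM A B = ∑ k ∈ t, ((Aᵀ *ᵥ u k) ⬝ᵥ c k) := hsum
    _ ≤ ∑ k ∈ t, opNorm A * Real.sqrt (c k ⬝ᵥ c k) :=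
        Finset.sum_le_sum (fun k _ => hterm k)
    _ = opNorm A * ∑ k ∈ t, Real.sqrt (c k ⬝ᵥ c k) := by rw [Finset.mul_sum]
    _ ≤ opNorm A * (Real.sqrt t.card * Real.sqrt (∑ k ∈ t, Real.sqrt (c k ⬝ᵥ c k) ^ 2)) := by
        refine mul_le_mul_of_nonneg_left ?_ (norm_nonneg _)
        exact cs_card t _ (fun k _ => Real.sqrt_nonneg _)
    _ ≤ opNorm A * (Real.sqrt B.rank * frobNorm B) := by
        refine mul_le_mul_of_nonneg_left ?_ (norm_nonneg _)
        rw [hcardt]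
        refine mul_le_mul_of_nonneg_left ?_ (Real.sqrt_nonneg _)
        have h1 : ∑ k ∈ t, Real.sqrt (c k ⬝ᵥ c k) ^ 2 = ∑ k ∈ t, (c k ⬝ᵥ c k) :=
          Finset.sum_congr rfl (fun k _ => Real.sq_sqrt (hccnn k))
        rw [h1]
        calc Real.sqrt (∑ k ∈ t, (c k ⬝ᵥ c k)) ≤ Real.sqrt (frobNorm B ^ 2) :=
              Real.sqrt_le_sqrt hsub
          _ = frobNorm B := Real.sqrt_sq (frob_nonneg B)
    _ = Real.sqrt B.rank * opNorm A * frobNorm B := by ring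

lemma le_maxNorm {p q : ℕ} (A : Matrix (Fin p) (Fin q) ℝ) (i : Fin p) (j : Fin q) :
    |A i j| ≤ maxNorm A := by
  have h1 : |A i j| ≤ ⨆ j', |A i j'| :=
    le_ciSup (f := fun j' => |A i j'|) (Set.Finite.bddAbove (Set.finite_range _)) j
  exact h1.trans
    (le_ciSup (f := fun i' => ⨆ j', |A i' j'|) (Set.Finite.bddAbove (Set.finite_range _)) i)

lemma maxNorm_nonneg {p q : ℕ} (A : Matrix (Fin p) (Fin q) ℝ) : 0 ≤ maxNorm A := by
  rcases isEmpty_or_nonempty (Fin p) with h | h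
  · rw [maxNorm, Real.iSup_of_isEmpty]
  rcases isEmpty_or_nonempty (Fin q) with h2 | h2
  · rw [maxNorm]
    simp [Real.iSup_of_isEmpty]
  · exact (abs_nonneg _).trans (le_maxNorm A h.some h2.some)

/-- Sparse duality: `⟨A, S⟩ ≤ √‖S‖₀ ‖A‖_max ‖S‖_F`. -/
lemma innerM_le_sparse {p q : ℕ} (A S : Matrix (Fin p) (Fin q) ℝ) :
    innerM A S ≤ Real.sqrt (sparsity S) * maxNorm A * frobNorm S := by
  classical
  set t := Finset.univ.filter (fun ij : Fin p × Fin q => S ij.1 ij.2 ≠ 0) with ht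
  have hcard : (t.card : ℕ) = sparsity S := by
    rw [sparsity, ← Set.ncard_coe_finset]
    congr 1
    ext ij
    simp [ht]
  have h1 : innerM A S = ∑ ij ∈ t, A ij.1 ij.2 * S ij.1 ij.2 := by
    have hprod : ∑ ij : Fin p × Fin q, A ij.1 ij.2 * S ij.1 ij.2
        = ∑ i, ∑ j, A i j * S i j := Fintype.sum_prod_type _
    rw [innerM, ← hprod]
    exact (Finset.sum_filter_of_ne (fun ij _ h => by
      intro h0; exact h (by rw [h0, mul_zero]))).symm
  have habs : ∀ ij ∈ t, A ij.1 ij.2 * S ij.1 ij.2 ≤ maxNorm A * |S ij.1 ij.2| := by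
    intro ij _
    calc A ij.1 ij.2 * S ij.1 ij.2 ≤ |A ij.1 ij.2 * S ij.1 ij.2| := le_abs_self _
      _ = |A ij.1 ij.2| * |S ij.1 ij.2| := abs_mul _ _
      _ ≤ maxNorm A * |S ij.1 ij.2| :=
          mul_le_mul_of_nonneg_right (le_maxNorm A _ _) (abs_nonneg _)
  have h2 : ∑ ij ∈ t, |S ij.1 ij.2| ≤ Real.sqrt t.card * frobNorm S := by
    have h3 := cs_card t (fun ij => |S ij.1 ij.2|) (fun ij _ => abs_nonneg _)
    refine h3.trans (mul_le_mul_of_nonneg_left ?_ (Real.sqrt_nonneg _))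
    rw [frobNorm]
    refine Real.sqrt_le_sqrt ?_
    calc ∑ ij ∈ t, |S ij.1 ij.2| ^ 2 = ∑ ij ∈ t, S ij.1 ij.2 ^ 2 := by simp [sq_abs]
      _ ≤ ∑ ij : Fin p × Fin q, S ij.1 ij.2 ^ 2 :=
          Finset.sum_le_sum_of_subset_of_nonneg (Finset.subset_univ t)
            (fun ij _ _ => sq_nonneg _)
      _ = ∑ i, ∑ j, S i j ^ 2 := Fintype.sum_prod_type _
  calc innerM A S = ∑ ij ∈ t, A ij.1 ij.2 * S ij.1 ij.2 := h1
    _ ≤ ∑ ij ∈ t, maxNorm A * |S ij.1 ij.2| := Finset.sum_le_sum habs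
    _ = maxNorm A * ∑ ij ∈ t, |S ij.1 ij.2| := by rw [Finset.mul_sum]
    _ ≤ maxNorm A * (Real.sqrt t.card * frobNorm S) :=
        mul_le_mul_of_nonneg_left h2 (maxNorm_nonneg A)
    _ = Real.sqrt (sparsity S) * maxNorm A * frobNorm S := by rw [← hcard]; ring

lemma frob_expand {a b : ℕ} (W M : Matrix (Fin a) (Fin b) ℝ) :
    frobNorm (W - M) ^ 2 = frobNorm W ^ 2 - 2 * innerM W M + frobNorm M ^ 2 := by
  rw [frob_sq, frob_sq, frob_sq, innerM]
  calc ∑ i, ∑ j, ((W - M) i j) ^ 2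
      = ∑ i, ∑ j, (W i j ^ 2 - 2 * (W i j * M i j) + M i j ^ 2) := by
        refine Finset.sum_congr rfl fun i _ => Finset.sum_congr rfl fun j _ => ?_
        simp [Matrix.sub_apply]; ring
    _ = (∑ i, ∑ j, W i j ^ 2) - 2 * (∑ i, ∑ j, W i j * M i j) + ∑ i, ∑ j, M i j ^ 2 := by
        simp only [Finset.sum_add_distrib, Finset.sum_sub_distrib, ← Finset.mul_sum]

lemma innerM_shift {m p q : ℕ} (X : Matrix (Fin m) (Fin p) ℝ) (W : Matrix (Fin m) (Fin q) ℝ)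
    (D : Matrix (Fin p) (Fin q) ℝ) : innerM W (X * D) = innerM (Xᵀ * W) D := by
  rw [innerM_eq_trace, innerM_eq_trace, Matrix.transpose_mul, ← Matrix.mul_assoc,
    Matrix.trace_mul_cycle]

lemma innerM_add_right {p q : ℕ} (A B C : Matrix (Fin p) (Fin q) ℝ) :
    innerM A (B + C) = innerM A B + innerM A C := by
  simp [innerM, Matrix.add_apply, mul_add, Finset.sum_add_distrib]

/-- Basic inequality from the optimality condition of the constrained
least-squares program: if `(L̂, Ŝ)` beats `(L*, S*)` in squared loss, `rank(Δ_L) ≤ 2r`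
and `‖Δ_S‖₀ ≤ 2s`, then
`‖X(Δ_L+Δ_S)‖_F² ≤ 2√(2r)‖XᵀW‖_op‖Δ_L‖_F + 2√(2s)‖XᵀW‖_max‖Δ_S‖_F`. -/
theorem basic_inequality {m p q : ℕ}
    (X : Matrix (Fin m) (Fin p) ℝ) (W : Matrix (Fin m) (Fin q) ℝ)
    (Lstar Sstar Lhat Shat : Matrix (Fin p) (Fin q) ℝ)
    (Y : Matrix (Fin m) (Fin q) ℝ)
    (hY : Y = X * (Lstar + Sstar) + W)
    (r s : ℕ)
    (hopt : frobNorm (Y - X * (Lhat + Shat)) ^ 2 ≤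
      frobNorm (Y - X * (Lstar + Sstar)) ^ 2)
    (hrank : (Lhat - Lstar).rank ≤ 2 * r)
    (hsparse : sparsity (Shat - Sstar) ≤ 2 * s) :
    frobNorm (X * ((Lhat - Lstar) + (Shat - Sstar))) ^ 2 ≤
      2 * Real.sqrt (2 * r) * opNorm (Xᵀ * W) * frobNorm (Lhat - Lstar)
      + 2 * Real.sqrt (2 * s) * maxNorm (Xᵀ * W) * frobNorm (Shat - Sstar) := by
  set DL := Lhat - Lstar with hDL
  set DS := Shat - Sstar with hDS
  set D := DL + DS with hD
  set A := Xᵀ * W with hA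
  have hW : Y - X * (Lstar + Sstar) = W := by rw [hY]; abel
  have hdiff : Y - X * (Lhat + Shat) = W - X * D := by
    have hXD : X * (Lhat + Shat) = X * (Lstar + Sstar) + X * D := by
      rw [← Matrix.mul_add]
      congr 1
      rw [hD, hDL, hDS]; abel
    rw [hY, hXD]
    abel
  rw [hdiff, hW, frob_expand] at hopt
  have hbasic : frobNorm (X * D) ^ 2 ≤ 2 * innerM W (X * D) := by linarith
  have hsplit : innerM W (X * D) = innerM A DL + innerM A DS := by
    rw [innerM_shift, ← hA, hD, innerM_add_right]
  have hL : innerM A DL ≤ Real.sqrt (2 * r) * opNorm A * frobNorm DL := by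
    refine (innerM_le_lowrank A DL).trans ?_
    have h1 : Real.sqrt DL.rank ≤ Real.sqrt (2 * r) := by
      have : ((DL.rank : ℝ)) ≤ ((2 * r : ℕ) : ℝ) := Nat.cast_le.mpr hrank
      refine Real.sqrt_le_sqrt (this.trans_eq ?_)
      push_cast; ring
    exact mul_le_mul_of_nonneg_right
      (mul_le_mul_of_nonneg_right h1 (norm_nonneg _)) (frob_nonneg _)
  have hS : innerM A DS ≤ Real.sqrt (2 * s) * maxNorm A * frobNorm DS := by
    refine (innerM_le_sparse A DS).trans ?_
    have h1 : Real.sqrt (sparsity DS) ≤ Real.sqrt (2 * s) := by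
      have : ((sparsity DS : ℝ)) ≤ ((2 * s : ℕ) : ℝ) := Nat.cast_le.mpr hsparse
      refine Real.sqrt_le_sqrt (this.trans_eq ?_)
      push_cast; ring
    exact mul_le_mul_of_nonneg_right
      (mul_le_mul_of_nonneg_right h1 (maxNorm_nonneg _)) (frob_nonneg _)
  calc frobNorm (X * D) ^ 2 ≤ 2 * innerM W (X * D) := hbasic
    _ = 2 * (innerM A DL + innerM A DS) := by rw [hsplit]
    _ ≤ 2 * (Real.sqrt (2 * r) * opNorm A * frobNorm DL
        + Real.sqrt (2 * s) * maxNorm A * frobNorm DS) := by linarith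
    _ = 2 * Real.sqrt (2 * r) * opNorm A * frobNorm DL
        + 2 * Real.sqrt (2 * s) * maxNorm A * frobNorm DS := by ring
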